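/- Let G be a prime graph on a finite vertex set and let α be a new vertex not in V(G). Then the number of prime graphs H on V(G) ∪ {α} whose induced subgraph on V(G) equals G is exactly 2^{|V(G)|} − 2|V(G)| − 2. -/

import Mathlib

/-- `M` is a module of `G`: every vertex outside `M` is adjacent to all of `M` or to none. -/
def IsModule {V : Type*} (G : SimpleGraph V) (M : Set V) : Prop :=
  ∀ v ∉ M, (∀ m ∈ M, G.Adj v m) ∨ (∀ m ∈ M, ¬ G.Adj v m)

/-- `G` is prime: at least 4 vertices and only trivial modules. -/
def IsPrimeGraph {V : Type*} (G : SimpleGraph V) : Prop :=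
  4 ≤ Nat.card V ∧ ∀ M : Set V, IsModule G M → M = Set.univ ∨ M.Subsingleton

open Classical Set

section Aux

variable {V : Type*}

/-- The one-vertex extension of `G` with new neighborhood `S`. -/
def extG (G : SimpleGraph V) (S : Set V) : SimpleGraph (V ⊕ Unit) where
  Adj x y := match x, y with
    | Sum.inl a, Sum.inl b => G.Adj a b
    | Sum.inl a, Sum.inr _ => a ∈ S
    | Sum.inr _, Sum.inl b => b ∈ S
    | Sum.inr _, Sum.inr _ => False
  symm := ⟨by rintro (a|a) (b|b) h; exacts [G.adj_symm h, h, h, h.elim]⟩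
  loopless := ⟨by rintro (a|a) h; exacts [G.irrefl h, h]⟩

/-- `S` is a "good" neighborhood for the new vertex. -/
def Good (G : SimpleGraph V) (S : Set V) : Prop :=
  S ≠ ∅ ∧ S ≠ Set.univ ∧ (∀ v, S ≠ G.neighborSet v) ∧
    ∀ v, S ≠ insert v (G.neighborSet v)

variable {G : SimpleGraph V}

lemma pair_not_module (hG : IsPrimeGraph G) {u v : V} (huv : u ≠ v)
    (h : ∀ w, w ≠ u → w ≠ v → (G.Adj w u ↔ G.Adj w v)) : False := by
  have hmod : IsModule G {u, v} := by
    intro w hw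
    simp only [mem_insert_iff, mem_singleton_iff, not_or] at hw
    by_cases hwu : G.Adj w u
    · left
      rintro m (rfl | rfl)
      · exact hwu
      · exact (h w hw.1 hw.2).mp hwu
    · right
      rintro m (rfl | rfl)
      · exact hwu
      · exact fun hc => hwu ((h w hw.1 hw.2).mpr hc)
  rcases hG.2 _ hmod with h1 | h1
  · have h2 : ({u, v} : Set V).ncard ≤ 2 := by
      refine le_trans (Set.ncard_insert_le _ _) ?_
      simp [Set.ncard_singleton]
    rw [h1, Set.ncard_univ] at h2
    have := hG.1
    omega
  · exact huv (h1 (by simp) (by simp))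

lemma compl_not_module (hG : IsPrimeGraph G) {v : V}
    (h : (∀ w, w ≠ v → G.Adj v w) ∨ (∀ w, w ≠ v → ¬ G.Adj v w)) : False := by
  classical
  have hfin : Finite V := Nat.finite_of_card_ne_zero (by have := hG.1; omega)
  have hmod : IsModule G ({v}ᶜ) := by
    intro w hw
    simp only [mem_compl_iff, mem_singleton_iff, not_not] at hw
    subst hw
    rcases h with h | h
    · exact Or.inl fun m hm => h m (by simpa using hm)
    · exact Or.inr fun m hm => h m (by simpa using hm)
  rcases hG.2 _ hmod with h1 | h1
  · have : v ∈ ({v}ᶜ : Set V) := h1 ▸ Set.mem_univ v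
    simp at this
  · have h2 : (({v}ᶜ : Set V)).ncard + ({v} : Set V).ncard = Nat.card V := by
      rw [Nat.add_comm, Set.ncard_add_ncard_compl]
    rw [Set.ncard_singleton] at h2
    have h4 := hG.1
    have h3 : 1 < (({v}ᶜ : Set V)).ncard := by omega
    rw [Set.one_lt_ncard_iff (Set.toFinite _)] at h3
    obtain ⟨a, b, ha, hb, hab⟩ := h3
    exact hab (h1 ha hb)

lemma neighborSet_injective (hG : IsPrimeGraph G) :
    Function.Injective G.neighborSet := by
  intro u v h
  by_contra huv
  refine pair_not_module hG huv fun w _ _ => ?_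
  rw [G.adj_comm w u, G.adj_comm w v]
  rw [← SimpleGraph.mem_neighborSet, ← SimpleGraph.mem_neighborSet, h]

lemma closed_injective (hG : IsPrimeGraph G) :
    Function.Injective (fun v => insert v (G.neighborSet v)) := by
  intro u v h
  by_contra huv
  simp only at h
  refine pair_not_module hG huv fun w hwu hwv => ?_
  have h1 : w ∈ insert u (G.neighborSet u) ↔ w ∈ insert v (G.neighborSet v) := by rw [h]
  simp only [mem_insert_iff, SimpleGraph.mem_neighborSet, hwu, hwv, false_or] at h1
  rw [G.adj_comm w u, G.adj_comm w v]; exact h1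

lemma neighborSet_ne_empty (hG : IsPrimeGraph G) (v : V) : G.neighborSet v ≠ ∅ := by
  intro h
  refine compl_not_module hG (v := v) (Or.inr fun w _ hadj => ?_)
  have h2 : w ∈ G.neighborSet v := hadj
  rw [h] at h2; exact h2

lemma closed_ne_univ (hG : IsPrimeGraph G) (v : V) :
    insert v (G.neighborSet v) ≠ Set.univ := by
  intro h
  refine compl_not_module hG (v := v) (Or.inl fun w hw => ?_)
  have h2 : w ∈ insert v (G.neighborSet v) := h ▸ Set.mem_univ w
  rcases h2 with h1 | h1
  · exact absurd h1 hw
  · exact h1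

lemma neighborSet_ne_closed (u v : V) :
    G.neighborSet u ≠ insert v (G.neighborSet v) := by
  intro h
  have hv : v ∈ G.neighborSet u := by rw [h]; exact Set.mem_insert _ _
  have huv : u ≠ v := by rintro rfl; exact G.irrefl hv
  have hu : u ∈ G.neighborSet u := by
    rw [h]; exact Set.mem_insert_iff.mpr (Or.inr (G.adj_symm hv))
  exact G.irrefl hu

lemma eq_extG (H : SimpleGraph (V ⊕ Unit))
    (hH : ∀ a b : V, H.Adj (Sum.inl a) (Sum.inl b) ↔ G.Adj a b) :
    H = extG G {v | H.Adj (Sum.inl v) (Sum.inr ())} := by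
  ext x y
  rcases x with a | u <;> rcases y with b | u'
  · exact hH a b
  · cases u'; exact Iff.rfl
  · cases u
    show H.Adj _ _ ↔ H.Adj (Sum.inl b) (Sum.inr ())
    rw [SimpleGraph.adj_comm]
  · cases u; cases u'
    constructor
    · intro h; exact H.irrefl h
    · intro h; exact h.elim

lemma prime_extG_iff [Finite V] (hG : IsPrimeGraph G) (S : Set V) :
    IsPrimeGraph (extG G S) ↔ Good G S := by
  have hnt : Nontrivial V := Finite.one_lt_card_iff_nontrivial.mp (by have := hG.1; omega)
  constructor
  · intro hP
    refine ⟨?_, ?_, ?_, ?_⟩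
    · -- S ≠ ∅
      rintro rfl
      have hmod : IsModule (extG G ∅) (Set.range Sum.inl) := by
        rintro (a | u) hx
        · exact absurd ⟨a, rfl⟩ hx
        · right; rintro m ⟨b, rfl⟩ h; exact h
      rcases hP.2 _ hmod with h1 | h1
      · have : (Sum.inr () : V ⊕ Unit) ∈ Set.range Sum.inl := h1 ▸ Set.mem_univ _
        obtain ⟨a, ha⟩ := this; exact Sum.inl_ne_inr ha
      · obtain ⟨a, b, hab⟩ := hnt
        exact hab (Sum.inl.inj (h1 ⟨a, rfl⟩ ⟨b, rfl⟩))
    · -- S ≠ univ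
      rintro rfl
      have hmod : IsModule (extG G Set.univ) (Set.range Sum.inl) := by
        rintro (a | u) hx
        · exact absurd ⟨a, rfl⟩ hx
        · left; rintro m ⟨b, rfl⟩; exact Set.mem_univ b
      rcases hP.2 _ hmod with h1 | h1
      · have : (Sum.inr () : V ⊕ Unit) ∈ Set.range Sum.inl := h1 ▸ Set.mem_univ _
        obtain ⟨a, ha⟩ := this; exact Sum.inl_ne_inr ha
      · obtain ⟨a, b, hab⟩ := hnt
        exact hab (Sum.inl.inj (h1 ⟨a, rfl⟩ ⟨b, rfl⟩))
    · -- S ≠ N v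
      rintro v rfl
      have hmod : IsModule (extG G (G.neighborSet v)) {Sum.inl v, Sum.inr ()} := by
        rintro (w | u) hx
        · simp only [mem_insert_iff, mem_singleton_iff, not_or] at hx
          have hwv : w ≠ v := fun h => hx.1 (by rw [h])
          by_cases hadj : G.Adj w v
          · left
            rintro m (rfl | rfl)
            · exact hadj
            · exact G.adj_symm hadj
          · right
            rintro m (rfl | rfl)
            · exact hadj
            · exact fun h => hadj (G.adj_symm h)
        · cases u; exact absurd (Or.inr rfl) hx
      rcases hP.2 _ hmod with h1 | h1
      · obtain ⟨a, b, hab⟩ := hnt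
        have ha : (Sum.inl a : V ⊕ Unit) ∈ ({Sum.inl v, Sum.inr ()} : Set (V ⊕ Unit)) :=
          h1 ▸ Set.mem_univ _
        have hb : (Sum.inl b : V ⊕ Unit) ∈ ({Sum.inl v, Sum.inr ()} : Set (V ⊕ Unit)) :=
          h1 ▸ Set.mem_univ _
        rcases ha with ha | ha <;> rcases hb with hb | hb <;>
          first
            | (exact hab (Sum.inl.inj (ha.trans hb.symm)))
            | (exact Sum.inl_ne_inr ha)
            | (exact Sum.inl_ne_inr hb)
      · exact Sum.inl_ne_inr (h1 (Or.inl rfl) (Or.inr rfl))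
    · -- S ≠ insert v (N v)
      rintro v rfl
      have hmod : IsModule (extG G (insert v (G.neighborSet v)))
          {Sum.inl v, Sum.inr ()} := by
        rintro (w | u) hx
        · simp only [mem_insert_iff, mem_singleton_iff, not_or] at hx
          have hwv : w ≠ v := fun h => hx.1 (by rw [h])
          by_cases hadj : G.Adj w v
          · left
            rintro m (rfl | rfl)
            · exact hadj
            · exact Or.inr (G.adj_symm hadj)
          · right
            rintro m (rfl | rfl)
            · exact hadj
            · rintro (h | h)
              · exact hwv h
              · exact hadj (G.adj_symm h)
        · cases u; exact absurd (Or.inr rfl) hx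
      rcases hP.2 _ hmod with h1 | h1
      · obtain ⟨a, b, hab⟩ := hnt
        have ha : (Sum.inl a : V ⊕ Unit) ∈ ({Sum.inl v, Sum.inr ()} : Set (V ⊕ Unit)) :=
          h1 ▸ Set.mem_univ _
        have hb : (Sum.inl b : V ⊕ Unit) ∈ ({Sum.inl v, Sum.inr ()} : Set (V ⊕ Unit)) :=
          h1 ▸ Set.mem_univ _
        rcases ha with ha | ha <;> rcases hb with hb | hb <;>
          first
            | (exact hab (Sum.inl.inj (ha.trans hb.symm)))
            | (exact Sum.inl_ne_inr ha)
            | (exact Sum.inl_ne_inr hb)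
      · exact Sum.inl_ne_inr (h1 (Or.inl rfl) (Or.inr rfl))
  · intro hS
    constructor
    · rw [Nat.card_sum]
      have := hG.1
      simp only [Nat.card_unique]
      omega
    · intro M hM
      by_cases hs : M.Subsingleton
      · exact Or.inr hs
      rw [Set.not_subsingleton_iff] at hs
      left
      set M' : Set V := {a | Sum.inl a ∈ M} with hM'def
      have hM'mod : IsModule G M' := by
        intro w hw
        rcases hM (Sum.inl w) hw with h | h
        · left; exact fun m hm => h (Sum.inl m) hm
        · right; exact fun m hm => h (Sum.inl m) hm
      by_cases hα : (Sum.inr () : V ⊕ Unit) ∈ M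
      · rcases hG.2 _ hM'mod with h1 | h1
        · ext x
          simp only [Set.mem_univ, iff_true]
          rcases x with a | u
          · exact (h1 ▸ Set.mem_univ a : a ∈ M')
          · cases u; exact hα
        · -- M' is a subsingleton; derive a contradiction with Good
          obtain ⟨x, hx, y, hy, hxy⟩ := hs
          have hex : ∃ v, Sum.inl v ∈ M := by
            rcases x with a | u
            · exact ⟨a, hx⟩
            · rcases y with b | u'
              · exact ⟨b, hy⟩
              · cases u; cases u'; exact absurd rfl hxy
          obtain ⟨v, hv⟩ := hex
          have hMeq : M = {Sum.inl v, Sum.inr ()} := by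
            ext z
            constructor
            · intro hz
              rcases z with a | u
              · exact Or.inl (by rw [h1 hz hv])
              · cases u; exact Or.inr rfl
            · rintro (rfl | rfl)
              · exact hv
              · exact hα
          have key : ∀ w, w ≠ v → (w ∈ S ↔ G.Adj w v) := by
            intro w hwv
            have hw : Sum.inl w ∉ M := by
              rw [hMeq]
              rintro (h | h)
              · exact hwv (Sum.inl.inj h)
              · exact Sum.inl_ne_inr h
            rcases hM _ hw with h | h
            · have h2 : (extG G S).Adj (Sum.inl w) (Sum.inl v) :=
                h _ (hMeq ▸ Or.inl rfl)
              have h3 : (extG G S).Adj (Sum.inl w) (Sum.inr ()) :=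
                h _ (hMeq ▸ Or.inr rfl)
              exact iff_of_true h3 h2
            · have h2 := h _ (hMeq ▸ Or.inl rfl : Sum.inl v ∈ M)
              have h3 := h _ (hMeq ▸ Or.inr rfl : (Sum.inr () : V ⊕ Unit) ∈ M)
              exact iff_of_false h3 h2
          by_cases hv' : v ∈ S
          · refine absurd ?_ (hS.2.2.2 v)
            ext w
            by_cases hwv : w = v
            · subst hwv; simp [hv']
            · simp only [mem_insert_iff, SimpleGraph.mem_neighborSet, hwv, false_or]
              rw [key w hwv, G.adj_comm]
          · refine absurd ?_ (hS.2.2.1 v)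
            ext w
            by_cases hwv : w = v
            · simp only [SimpleGraph.mem_neighborSet, hwv]
              exact iff_of_false hv' G.irrefl
            · simp only [SimpleGraph.mem_neighborSet]
              rw [key w hwv, G.adj_comm]
      · -- inr ∉ M : contradiction
        exfalso
        have hMsub : M = Sum.inl '' M' := by
          ext z
          constructor
          · intro hz
            rcases z with a | u
            · exact ⟨a, hz, rfl⟩
            · cases u; exact absurd hz hα
          · rintro ⟨a, ha, rfl⟩; exact ha
        rcases hG.2 _ hM'mod with h1 | h1
        · -- M = range inl, so S = univ or ∅
          rcases hM _ hα with h | h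
          · refine hS.2.1 ?_
            ext a
            simp only [Set.mem_univ, iff_true]
            exact h (Sum.inl a) (hMsub ▸ ⟨a, h1 ▸ Set.mem_univ a, rfl⟩)
          · refine hS.1 ?_
            ext a
            simp only [Set.mem_empty_iff_false, iff_false]
            exact h (Sum.inl a) (hMsub ▸ ⟨a, h1 ▸ Set.mem_univ a, rfl⟩)
        · obtain ⟨x, hx, y, hy, hxy⟩ := hs
          rw [hMsub] at hx hy
          obtain ⟨a, ha, rfl⟩ := hx
          obtain ⟨b, hb, rfl⟩ := hy
          exact hxy (congrArg Sum.inl (h1 ha hb))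

end Aux

theorem card_prime_one_extensions {V : Type*} [Finite V] (G : SimpleGraph V)
    (hG : IsPrimeGraph G) :
    Nat.card {H : SimpleGraph (V ⊕ Unit) //
        (∀ a b : V, H.Adj (Sum.inl a) (Sum.inl b) ↔ G.Adj a b) ∧ IsPrimeGraph H}
      = 2 ^ Nat.card V - 2 * Nat.card V - 2 := by
  classical
  have e : {H : SimpleGraph (V ⊕ Unit) //
      (∀ a b : V, H.Adj (Sum.inl a) (Sum.inl b) ↔ G.Adj a b) ∧ IsPrimeGraph H} ≃
      {S : Set V // Good G S} :=
    { toFun := fun p => ⟨{v | p.1.Adj (Sum.inl v) (Sum.inr ())},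
        (prime_extG_iff hG _).mp ((eq_extG p.1 p.2.1) ▸ p.2.2)⟩
      invFun := fun s => ⟨extG G s.1, fun a b => Iff.rfl, (prime_extG_iff hG _).mpr s.2⟩
      left_inv := fun p => Subtype.ext (eq_extG p.1 p.2.1).symm
      right_inv := fun s => Subtype.ext (Set.ext fun v => Iff.rfl) }
  rw [Nat.card_congr e]
  -- Now count good sets
  set Bad : Set (Set V) :=
    insert ∅ (insert Set.univ
      (Set.range G.neighborSet ∪ Set.range fun v => insert v (G.neighborSet v))) with hBad
  have hGood : ∀ S : Set V, Good G S ↔ S ∈ Badᶜ := by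
    intro S
    simp only [hBad, Good, Set.mem_compl_iff, Set.mem_insert_iff, Set.mem_union,
      Set.mem_range, not_or, not_exists]
    constructor
    · rintro ⟨h1, h2, h3, h4⟩
      exact ⟨h1, h2, fun v h => h3 v h.symm, fun v h => h4 v h.symm⟩
    · rintro ⟨h1, h2, h3, h4⟩
      exact ⟨h1, h2, fun v h => h3 v h.symm, fun v h => h4 v h.symm⟩
  have e2 : {S : Set V // Good G S} ≃ (Badᶜ : Set (Set V)) :=
    Equiv.subtypeEquivRight hGood
  rw [Nat.card_congr e2, Nat.card_coe_set_eq]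
  have hcompl : Bad.ncard + (Badᶜ).ncard = Nat.card (Set V) :=
    Set.ncard_add_ncard_compl Bad (Set.toFinite _) (Set.toFinite _)
  have hcardSet : Nat.card (Set V) = 2 ^ Nat.card V := by
    have := Fintype.ofFinite V
    rw [Nat.card_eq_fintype_card, Nat.card_eq_fintype_card, Fintype.card_set]
  -- compute |Bad|
  have hNn : (Set.range G.neighborSet).ncard = Nat.card V := by
    rw [← Nat.card_coe_set_eq, Nat.card_range_of_injective (neighborSet_injective hG)]
  have hCn : (Set.range fun v => insert v (G.neighborSet v)).ncard = Nat.card V := by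
    rw [← Nat.card_coe_set_eq, Nat.card_range_of_injective (closed_injective hG)]
  have hdisj : Disjoint (Set.range G.neighborSet)
      (Set.range fun v => insert v (G.neighborSet v)) := by
    rw [Set.disjoint_left]
    rintro x ⟨u, rfl⟩ ⟨v, hv⟩
    exact neighborSet_ne_closed u v hv.symm
  have hT : (Set.range G.neighborSet ∪
      Set.range fun v => insert v (G.neighborSet v)).ncard = 2 * Nat.card V := by
    rw [Set.ncard_union_eq hdisj (Set.toFinite _) (Set.toFinite _), hNn, hCn]
    ring
  have huniv_notmem : (Set.univ : Set V) ∉ Set.range G.neighborSet ∪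
      Set.range fun v => insert v (G.neighborSet v) := by
    rintro (⟨v, hv⟩ | ⟨v, hv⟩)
    · have : v ∈ G.neighborSet v := hv ▸ Set.mem_univ v
      exact G.irrefl this
    · exact closed_ne_univ hG v (by simpa using hv)
  have hempty_notmem : (∅ : Set V) ∉ insert Set.univ (Set.range G.neighborSet ∪
      Set.range fun v => insert v (G.neighborSet v)) := by
    rintro (h | ⟨v, hv⟩ | ⟨v, hv⟩)
    · have : Nontrivial V := Finite.one_lt_card_iff_nontrivial.mp (by have := hG.1; omega)
      obtain ⟨a, b, hab⟩ := this
      have : a ∈ (∅ : Set V) := h ▸ Set.mem_univ a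
      exact this
    · exact neighborSet_ne_empty hG v hv
    · have : v ∈ (∅ : Set V) := hv ▸ Set.mem_insert v _
      exact this
  have hBadCard : Bad.ncard = 2 * Nat.card V + 2 := by
    rw [hBad, Set.ncard_insert_of_notMem hempty_notmem (Set.toFinite _),
      Set.ncard_insert_of_notMem huniv_notmem (Set.toFinite _), hT]
  have h2n : 2 * Nat.card V + 2 ≤ 2 ^ Nat.card V := by
    have hn := hG.1
    have : ∀ n : ℕ, 4 ≤ n → 2 * n + 2 ≤ 2 ^ n := by
      intro n hn
      induction n with
      | zero => omega
      | succ m ih =>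
        rcases Nat.lt_or_ge m 4 with h | h
        · interval_cases m <;> simp_all
        · have := ih (by omega)
          have h2 : 2 ^ m ≤ 2 ^ (m + 1) := Nat.pow_le_pow_right (by norm_num) (by omega)
          have h3 : 2 ^ (m+1) = 2 * 2 ^ m := by ring
          omega
    exact this _ hn
  omega
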